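/- Let X be a bounded positive injective operator on L²((0,∞); k) satisfying the Toeplitz condition T_t* X T_t = X for all t ≥ 0, where (T_t) is the right-shift semigroup. Then for each t, the operator √X T_t √X⁻¹ (defined on the range of √X) is isometric, hence extends to an isometry Y_t on L²((0,∞); k), and (Y_t)_{t≥0} is a strongly continuous semigroup of isometries. -/

import Mathlib

open ContinuousLinearMap

/-- Let `(T t)` be a strongly continuous semigroup of isometries (e.g. the right-shift
semigroup on `L²((0,∞); k)`) and `X` a bounded positive injective operator satisfying the
Toeplitz condition `T t* X T t = X` for all `t ≥ 0`.  Let `S = √X` be the positive square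
root of `X`.  Then the operators `√X ∘ T t ∘ √X⁻¹` (defined on the range of `√X`) are
isometric, and extend to a strongly continuous semigroup `(Y t)` of isometries satisfying
`Y t (√X f) = √X (T t f)`. -/
theorem stmt7 {H : Type*} [NormedAddCommGroup H] [InnerProductSpace ℂ H] [CompleteSpace H]
    (T : ℝ → H →L[ℂ] H)
    (hT0 : T 0 = 1)
    (hTsg : ∀ s t : ℝ, 0 ≤ s → 0 ≤ t → T (s + t) = T s ∘L T t)
    (hTiso : ∀ t : ℝ, 0 ≤ t → ∀ f : H, ‖T t f‖ = ‖f‖)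
    (hTcont : ∀ f : H, ContinuousOn (fun t => T t f) (Set.Ici 0))
    (X : H →L[ℂ] H) (hX : X.IsPositive) (hXinj : Function.Injective X)
    (hToe : ∀ t : ℝ, 0 ≤ t → ContinuousLinearMap.adjoint (T t) ∘L X ∘L T t = X)
    (S : H →L[ℂ] H) (hS : S.IsPositive) (hSsq : S ∘L S = X) :
    ∃ Y : ℝ → H →L[ℂ] H,
      Y 0 = 1 ∧
      (∀ s t : ℝ, 0 ≤ s → 0 ≤ t → Y (s + t) = Y s ∘L Y t) ∧
      (∀ t : ℝ, 0 ≤ t → ∀ f : H, ‖Y t f‖ = ‖f‖) ∧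
      (∀ f : H, ContinuousOn (fun t => Y t f) (Set.Ici 0)) ∧
      (∀ t : ℝ, 0 ≤ t → ∀ f : H, Y t (S f) = S (T t f)) := by
  classical
  have hSsa : ContinuousLinearMap.adjoint S = S := hS.1.clm_adjoint_eq
  -- `‖S g‖² = re ⟪g, X g⟫`
  have hnorm : ∀ g : H, ‖S g‖ ^ 2 = RCLike.re (inner (𝕜 := ℂ) g (X g)) := by
    intro g
    have h1 : inner (𝕜 := ℂ) (S g) (S g) = inner (𝕜 := ℂ) g (X g) := by
      calc inner (𝕜 := ℂ) (S g) (S g)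
          = inner (𝕜 := ℂ) (ContinuousLinearMap.adjoint S g) (S g) := by rw [hSsa]
        _ = inner (𝕜 := ℂ) g (S (S g)) := ContinuousLinearMap.adjoint_inner_left S (S g) g
        _ = inner (𝕜 := ℂ) g (X g) := by rw [← hSsq]; rfl
    rw [← inner_self_eq_norm_sq (𝕜 := ℂ), h1]
  -- key isometry computation
  have key : ∀ t : ℝ, 0 ≤ t → ∀ f : H, ‖S (T t f)‖ = ‖S f‖ := by
    intro t ht f
    have h2 : inner (𝕜 := ℂ) (T t f) (X (T t f)) = inner (𝕜 := ℂ) f (X f) := by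
      conv_rhs => rw [← hToe t ht]
      rw [ContinuousLinearMap.comp_apply, ContinuousLinearMap.comp_apply,
        ContinuousLinearMap.adjoint_inner_right]
    have h3 : ‖S (T t f)‖ ^ 2 = ‖S f‖ ^ 2 := by rw [hnorm, hnorm, h2]
    nlinarith [norm_nonneg (S (T t f)), norm_nonneg (S f)]
  -- S is injective
  have hSinj : Function.Injective S := by
    intro a b hab
    apply hXinj
    have : S (S a) = S (S b) := by rw [hab]
    simpa [← hSsq] using this
  -- S has dense range
  have hdense : DenseRange (fun f : H => S f) := by
    have hbot : (LinearMap.range (S : H →ₗ[ℂ] H))ᗮ = ⊥ := by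
      rw [Submodule.eq_bot_iff]
      intro v hv
      have h0 : inner (𝕜 := ℂ) (S (S v)) v = 0 :=
        hv (S (S v)) (LinearMap.mem_range.2 ⟨S v, rfl⟩)
      have hz : inner (𝕜 := ℂ) (S v) (S v) = 0 := by
        calc inner (𝕜 := ℂ) (S v) (S v)
            = inner (𝕜 := ℂ) (ContinuousLinearMap.adjoint S (S v)) v :=
              (ContinuousLinearMap.adjoint_inner_left S v (S v)).symm
          _ = 0 := by rw [hSsa]; exact h0
      have hSv : S v = 0 := inner_self_eq_zero.mp hz
      exact hSinj (by simpa using hSv)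
    have htop := (Submodule.topologicalClosure_eq_top_iff
      (K := LinearMap.range (S : H →ₗ[ℂ] H))).2 hbot
    have hd := Submodule.dense_iff_topologicalClosure_eq_top.2 htop
    have : (LinearMap.range (S : H →ₗ[ℂ] H) : Set H) = Set.range fun f : H => S f := by
      ext x; simp [LinearMap.mem_range, eq_comm]
    rwa [DenseRange, ← this]
  -- the range submodule and the linear equivalence onto it
  set p : Submodule ℂ H := LinearMap.range (S : H →ₗ[ℂ] H) with hp
  let Sr : H →ₗ[ℂ] p := (S : H →ₗ[ℂ] H).rangeRestrict
  have hSrbij : Function.Bijective Sr := by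
    constructor
    · intro a b hab
      exact hSinj (congrArg Subtype.val hab)
    · exact (S : H →ₗ[ℂ] H).surjective_rangeRestrict
  let e₀ : H ≃ₗ[ℂ] p := LinearEquiv.ofBijective Sr hSrbij
  have he₀ : ∀ f : H, ((e₀ f : p) : H) = S f := fun f => rfl
  have he₀symm : ∀ f : H, e₀.symm (e₀ f) = f := fun f => e₀.symm_apply_apply f
  have hval : ∀ x : p, S (e₀.symm x) = (x : H) := by
    intro x
    obtain ⟨f, rfl⟩ := e₀.surjective x
    rw [he₀symm]
    exact (he₀ f).symm
  -- the densely defined isometries with bound 1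
  have hφbound : ∀ t : ℝ, 0 ≤ t → ∀ x : p,
      ‖S (T t (e₀.symm x))‖ ≤ 1 * ‖x‖ := by
    intro t ht x
    rw [one_mul, key t ht (e₀.symm x), hval x]
    exact le_of_eq rfl
  let φ : ℝ → (p →L[ℂ] H) := fun t =>
    LinearMap.mkContinuous
      (S.toLinearMap ∘ₗ (T (max t 0)).toLinearMap ∘ₗ e₀.symm.toLinearMap) 1
      (fun x => hφbound (max t 0) (le_max_right t 0) x)
  have hφ : ∀ t : ℝ, ∀ f : H, φ t (e₀ f) = S (T (max t 0) f) := by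
    intro t f
    show S (T (max t 0) (e₀.symm (e₀ f))) = _
    rw [he₀symm]
  -- the inclusion of p into H
  have hsub_dense : DenseRange (p.subtypeL : p →L[ℂ] H) := by
    have h1 : Set.range (p.subtypeL : p → H) = (p : Set H) := Subtype.range_coe
    have h2 : (p : Set H) = Set.range fun f : H => S f := by
      ext x; simp [hp, LinearMap.mem_range, eq_comm]
    rw [DenseRange, h1, h2]
    exact hdense
  have hsub_ui : IsUniformInducing (p.subtypeL : p →L[ℂ] H) :=
    isometry_subtype_coe.isUniformInducing
  -- the extended operators
  let Y : ℝ → H →L[ℂ] H := fun t => (φ t).extend p.subtypeL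
  have hY : ∀ t : ℝ, ∀ f : H, Y t (S f) = S (T (max t 0) f) := by
    intro t f
    have h1 : (p.subtypeL : p →L[ℂ] H) (e₀ f) = S f := he₀ f
    have h2 := ContinuousLinearMap.extend_eq (φ t) hsub_dense hsub_ui (e₀ f)
    rw [h1] at h2
    rw [show Y t (S f) = (φ t).extend p.subtypeL (S f) from rfl, h2, hφ]
  have hY' : ∀ t : ℝ, 0 ≤ t → ∀ f : H, Y t (S f) = S (T t f) := by
    intro t ht f
    rw [hY t f, max_eq_left ht]
  -- isometry property
  have hYiso : ∀ t : ℝ, 0 ≤ t → ∀ g : H, ‖Y t g‖ = ‖g‖ := by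
    intro t ht g
    refine hdense.induction_on g ?_ ?_
    · exact isClosed_eq ((Y t).continuous.norm) continuous_norm
    · intro f
      rw [hY' t ht f, key t ht f]
  refine ⟨Y, ?_, ?_, hYiso, ?_, hY'⟩
  · -- Y 0 = 1
    apply ContinuousLinearMap.ext
    intro g
    refine hdense.induction_on g ?_ ?_
    · exact isClosed_eq (Y 0).continuous continuous_id'
    · intro f
      rw [hY' 0 le_rfl f, hT0]
      rfl
  · -- semigroup
    intro s t hs ht
    apply ContinuousLinearMap.ext
    intro g
    refine hdense.induction_on g ?_ ?_
    · exact isClosed_eq (Y (s + t)).continuous ((Y s).continuous.comp (Y t).continuous)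
    · intro f
      simp only [ContinuousLinearMap.comp_apply]
      rw [hY' (s + t) (by linarith) f, hY' t ht f, hY' s hs (T t f), hTsg s t hs ht]
      rfl
  · -- strong continuity
    intro g s hs
    rw [Metric.continuousWithinAt_iff]
    intro ε hε
    -- approximate g by S f
    obtain ⟨f, hf⟩ := Metric.denseRange_iff.mp hdense g (ε / 3) (by linarith)
    -- continuity of t ↦ S (T t f) at s within Ici 0
    have hcont : ContinuousWithinAt (fun t => S (T t f)) (Set.Ici 0) s :=
      (S.continuous.comp_continuousOn (hTcont f)) s hs
    rw [Metric.continuousWithinAt_iff] at hcont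
    obtain ⟨δ, hδ, hδ'⟩ := hcont (ε / 3) (by linarith)
    refine ⟨δ, hδ, fun t ht hts => ?_⟩
    have hd1 : dist (Y t g) (Y t (S f)) < ε / 3 := by
      rw [dist_eq_norm, ← map_sub, hYiso t ht, ← dist_eq_norm]
      exact hf
    have hd3 : dist (Y s (S f)) (Y s g) < ε / 3 := by
      rw [dist_eq_norm, ← map_sub, hYiso s hs, ← dist_eq_norm, dist_comm]
      exact hf
    have hd2 : dist (Y t (S f)) (Y s (S f)) < ε / 3 := by
      rw [hY' t ht f, hY' s hs f]
      exact hδ' ht hts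
    calc dist (Y t g) (Y s g)
        ≤ dist (Y t g) (Y t (S f)) + dist (Y t (S f)) (Y s (S f))
            + dist (Y s (S f)) (Y s g) := dist_triangle4 _ _ _ _
      _ < ε / 3 + ε / 3 + ε / 3 := by linarith
      _ = ε := by ring
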